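/- Fix a positive integer n. For partitions λ, μ ∈ H(1,n), define F_λ(μ) = {ν ∈ S(μ) : c̃_ν = c̃_λ}. Suppose λ₁ ≤ n, μ₁ ≤ n, and μ is obtained from λ by deleting one box. Then F_λ(μ) = {λ}. -/

import Mathlib

/-- A partition: a weakly decreasing sequence of naturals indexed from 1 (value at 0 unused, set to 0). -/
def IsPartition (P : ℕ → ℕ) : Prop :=
  P 0 = 0 ∧ ∀ i, 1 ≤ i → P (i + 1) ≤ P i

/-- `Q` is obtained from `P` by adding the box `(i,j)`. -/
def AddsBox (P Q : ℕ → ℕ) (i j : ℕ) : Prop :=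
  1 ≤ i ∧ j = P i + 1 ∧ Q = Function.update P i (P i + 1) ∧ IsPartition Q

/-- `Q` is obtained from `P` by removing the box `(i,j)`. -/
def RemovesBox (P Q : ℕ → ℕ) (i j : ℕ) : Prop :=
  1 ≤ i ∧ j = P i ∧ 1 ≤ P i ∧ Q = Function.update P i (P i - 1) ∧ IsPartition Q

/-- `Q ∈ S(P)`. -/
def InS (P Q : ℕ → ℕ) : Prop :=
  Q = P ∨ (∃ i j, AddsBox P Q i j) ∨ (∃ i j, RemovesBox P Q i j)

/-- `c̃_λ = Σ_{(i,j)∈λ} (2j − 2i + 1 − 2n)`. -/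
def ctilde (n : ℕ) (P : ℕ → ℕ) (N : ℕ) : ℤ :=
  ∑ i ∈ Finset.Icc 1 N, ∑ j ∈ Finset.Icc 1 (P i),
    (2 * (j : ℤ) - 2 * (i : ℤ) + 1 - 2 * (n : ℤ))

/-- `F_λ(μ) = {ν ∈ S(μ) : c̃_ν = c̃_λ}`. -/
def Fset (n N : ℕ) (L M : ℕ → ℕ) : Set (ℕ → ℕ) :=
  {Q | InS M Q ∧ ctilde n Q N = ctilde n L N}

/- ### Auxiliary lemmas -/

def wgt (n i j : ℕ) : ℤ := 2 * (j : ℤ) - 2 * (i : ℤ) + 1 - 2 * (n : ℤ)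

def rowsum (n i v : ℕ) : ℤ := ∑ j ∈ Finset.Icc 1 v, wgt n i j

lemma ctilde_def (n : ℕ) (P : ℕ → ℕ) (N : ℕ) :
    ctilde n P N = ∑ i ∈ Finset.Icc 1 N, rowsum n i (P i) := rfl

lemma rowsum_succ (n i v : ℕ) : rowsum n i (v + 1) = rowsum n i v + wgt n i (v + 1) := by
  unfold rowsum
  rw [Finset.sum_Icc_succ_top (by omega : 1 ≤ v + 1)]

lemma part_mono {P : ℕ → ℕ} (hP : IsPartition P) {a b : ℕ} (ha : 1 ≤ a) (hab : a ≤ b) :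
    P b ≤ P a := by
  induction b, hab using Nat.le_induction with
  | base => exact le_refl _
  | succ b hb ih => exact le_trans (hP.2 b (le_trans ha hb)) ih

lemma wgt_neg {n i j : ℕ} (hi : 1 ≤ i) (hj : j ≤ n) : wgt n i j ≤ -1 := by
  unfold wgt; omega

lemma ctilde_update (n : ℕ) (P : ℕ → ℕ) (N i v : ℕ) (hi : i ∈ Finset.Icc 1 N) :
    ctilde n (Function.update P i v) N = ctilde n P N - rowsum n i (P i) + rowsum n i v := by
  rw [ctilde_def, ctilde_def]
  have h2 : ∑ i' ∈ Finset.Icc 1 N, rowsum n i' (Function.update P i v i')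
      = ∑ i' ∈ Finset.Icc 1 N, Function.update (fun k => rowsum n k (P k)) i (rowsum n i v) i' := by
    apply Finset.sum_congr rfl
    intro x hx
    by_cases hx' : x = i
    · subst hx'; simp
    · simp [Function.update_of_ne hx']
  rw [h2, Finset.sum_update_of_mem hi]
  have h3 : ∑ i' ∈ Finset.Icc 1 N, rowsum n i' (P i')
      = rowsum n i (P i) + ∑ x ∈ Finset.Icc 1 N \ {i}, rowsum n x (P x) := by
    rw [Finset.sdiff_singleton_eq_erase]
    exact (Finset.add_sum_erase _ (fun k => rowsum n k (P k)) hi).symm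
  rw [h3]; ring

lemma ctilde_congr (n : ℕ) (P Q : ℕ → ℕ) (N : ℕ) (h : ∀ i ∈ Finset.Icc 1 N, P i = Q i) :
    ctilde n P N = ctilde n Q N :=
  Finset.sum_congr rfl (fun i hi => by rw [h i hi])

/-- If `λ₁ ≤ n`, `μ₁ ≤ n` and `μ` is obtained from `λ` by deleting one box, then `F_λ(μ) = {λ}`. -/
theorem Fset_small (n : ℕ) (hn : 1 ≤ n) (P M : ℕ → ℕ) (hP : IsPartition P)
    (hPH : P 2 ≤ n) (hMH : M 2 ≤ n)
    (hP1 : P 1 ≤ n) (hM1 : M 1 ≤ n)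
    (hrem : ∃ i j, RemovesBox P M i j)
    (N : ℕ) (hN : ∀ r, N ≤ r → P r = 0) :
    Fset n N P M = {P} := by
  obtain ⟨i, j, hi1, hj, hPi1, hMdef, hMpart⟩ := hrem
  have hiltN : i < N := by
    by_contra h; push_neg at h; have := hN i h; omega
  have hiN : i ∈ Finset.Icc 1 N := Finset.mem_Icc.mpr ⟨hi1, by omega⟩
  have hPin : P i ≤ n := le_trans (part_mono hP le_rfl hi1) hP1
  have hw : wgt n i (P i) ≤ -1 := wgt_neg hi1 hPin
  obtain ⟨c, hc⟩ : ∃ c, P i = c + 1 := ⟨P i - 1, by omega⟩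
  have hMct : ctilde n M N = ctilde n P N - wgt n i (P i) := by
    rw [hMdef, ctilde_update n P N i _ hiN]
    rw [show P i - 1 = c from by omega, hc, rowsum_succ]
    ring
  have hMi : M i = c := by rw [hMdef]; simp; omega
  have hback : Function.update M i (M i + 1) = P := by
    funext x
    by_cases hx : x = i
    · subst hx
      rw [Function.update_self, hMi, hc]
    · rw [Function.update_of_ne hx, hMdef, Function.update_of_ne hx]
  ext Q
  simp only [Fset, Set.mem_setOf_eq, Set.mem_singleton_iff]
  constructor
  · rintro ⟨hQS, hQc⟩
    rcases hQS with rfl | ⟨i', j', hi'1, hj', hQdef, hQpart⟩ | ⟨i', j', hi'1, hj', hMi'1, hQdef, hQpart⟩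
    · exfalso; rw [hMct] at hQc; omega
    · -- adds a box at (i', M i' + 1)
      by_cases hi'N : i' ∈ Finset.Icc 1 N
      · have hQct : ctilde n Q N = ctilde n M N + wgt n i' (M i' + 1) := by
          rw [hQdef, ctilde_update n M N i' _ hi'N, rowsum_succ]; ring
        rw [hQct, hMct] at hQc
        have hww : wgt n i' (M i' + 1) = wgt n i (P i) := by omega
        by_cases hii : i' = i
        · subst hii
          rw [hback] at hQdef
          exact hQdef
        · exfalso
          have hMi' : M i' = P i' := by rw [hMdef, Function.update_of_ne hii]
          unfold wgt at hww
          rcases lt_or_gt_of_ne hii with h | h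
          · have : P i ≤ P i' := part_mono hP hi'1 (le_of_lt h)
            omega
          · have hMi1' : M (i + 1) = P (i + 1) := by
              rw [hMdef, Function.update_of_ne (by omega)]
            have h1 : P (i + 1) ≤ c := by
              have := hMpart.2 i hi1
              omega
            have h2 : P i' ≤ P (i + 1) := part_mono hP (by omega) h
            omega
      · exfalso
        have : ctilde n Q N = ctilde n M N := by
          apply ctilde_congr
          intro x hx
          rw [hQdef, Function.update_of_ne (by rintro rfl; exact hi'N hx)]
        rw [this, hMct] at hQc
        omega
    · -- removes a box at (i', M i')
      exfalso
      have hMi'P : M i' ≤ P i' := by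
        rw [hMdef]
        by_cases hx : i' = i
        · subst hx; simp
        · rw [Function.update_of_ne hx]
      have hi'N : i' ∈ Finset.Icc 1 N := by
        refine Finset.mem_Icc.mpr ⟨hi'1, ?_⟩
        by_contra h; push_neg at h
        have := hN i' (by omega)
        omega
      obtain ⟨c', hc'⟩ : ∃ c', M i' = c' + 1 := ⟨M i' - 1, by omega⟩
      have hQct : ctilde n Q N = ctilde n M N - wgt n i' (M i') := by
        rw [hQdef, ctilde_update n M N i' _ hi'N]
        rw [show M i' - 1 = c' from by omega, hc', rowsum_succ]
        ring
      have hMi'n : M i' ≤ n := le_trans (part_mono hMpart le_rfl hi'1) hM1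
      have hw' : wgt n i' (M i') ≤ -1 := wgt_neg hi'1 hMi'n
      rw [hQct, hMct] at hQc
      omega
  · rintro rfl
    refine ⟨Or.inr (Or.inl ⟨i, M i + 1, hi1, rfl, hback.symm, hP⟩), rfl⟩
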